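/- Tweedie's formula: Let X be a real random variable with |X| ≤ A a.s., N ~ N(0, σ²) independent of X, Y = X + N with density f_Y(y) = E[φ_σ(y − X)]. Then for every y ∈ ℝ, E[X | Y = y] = y + σ²·(d/dy) log f_Y(y). -/

import Mathlib

open MeasureTheory Real

noncomputable def gaussPdf (σ t : ℝ) : ℝ :=
  (Real.sqrt (2 * Real.pi * σ ^ 2))⁻¹ * Real.exp (-(t ^ 2) / (2 * σ ^ 2))

lemma gaussPdf_pos (σ t : ℝ) (hσ : 0 < σ) : 0 < gaussPdf σ t := by
  unfold gaussPdf
  have : 0 < 2 * Real.pi * σ ^ 2 := by positivity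
  positivity

lemma gaussPdf_le (σ t : ℝ) : gaussPdf σ t ≤ (Real.sqrt (2 * Real.pi * σ ^ 2))⁻¹ := by
  unfold gaussPdf
  have h1 : Real.exp (-(t ^ 2) / (2 * σ ^ 2)) ≤ 1 := by
    apply Real.exp_le_one_iff.mpr
    rcases eq_or_ne σ 0 with h | h
    · simp [h]
    · exact div_nonpos_of_nonpos_of_nonneg (neg_nonpos.mpr (by positivity)) (by positivity)
  have h2 : 0 ≤ (Real.sqrt (2 * Real.pi * σ ^ 2))⁻¹ := by positivity
  calc _ ≤ (Real.sqrt (2 * Real.pi * σ ^ 2))⁻¹ * 1 := by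
        exact mul_le_mul_of_nonneg_left h1 h2
    _ = _ := mul_one _

lemma gaussPdf_cont (σ : ℝ) : Continuous (gaussPdf σ) := by
  unfold gaussPdf
  fun_prop

lemma gaussPdf_anti (σ a b : ℝ) (hσ : 0 < σ) (h : |a| ≤ |b|) :
    gaussPdf σ b ≤ gaussPdf σ a := by
  unfold gaussPdf
  apply mul_le_mul_of_nonneg_left _ (by positivity)
  apply Real.exp_le_exp.mpr
  have : a ^ 2 ≤ b ^ 2 := by
    rw [← sq_abs a, ← sq_abs b]
    exact pow_le_pow_left₀ (abs_nonneg a) h 2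
  gcongr

lemma gauss_hasDeriv (σ x : ℝ) (hσ : 0 < σ) (u : ℝ) :
    HasDerivAt (fun u => gaussPdf σ (u - x)) ((x - u) / σ ^ 2 * gaussPdf σ (u - x)) u := by
  have h0 : HasDerivAt (fun u : ℝ => u - x) 1 u := (hasDerivAt_id u).sub_const x
  have h1 : HasDerivAt (fun u : ℝ => (u - x) ^ 2) (2 * (u - x)) u := by
    simpa using h0.fun_pow 2
  have h2 : HasDerivAt (fun u : ℝ => -((u - x) ^ 2) / (2 * σ ^ 2))
      (-(2 * (u - x)) / (2 * σ ^ 2)) u := h1.neg.div_const _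
  have h3 := (h2.exp).const_mul (Real.sqrt (2 * Real.pi * σ ^ 2))⁻¹
  have h4 : HasDerivAt (fun u => gaussPdf σ (u - x)) ((Real.sqrt (2 * Real.pi * σ ^ 2))⁻¹ *
      (Real.exp (-((u - x) ^ 2) / (2 * σ ^ 2)) * (-(2 * (u - x)) / (2 * σ ^ 2)))) u := h3
  convert h4 using 1
  unfold gaussPdf
  have hσ2 : σ ^ 2 ≠ 0 := by positivity
  field_simp
  ring

/-- Tweedie's formula: `E[X | Y = y] = y + σ² (d/dy) log f_Y(y)` for `Y = X + N`,
`N ~ N(0,σ²)`, with `|X| ≤ A` a.s. -/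
theorem tweedie_formula
    (σ A : ℝ) (hσ : 0 < σ) (hA : 0 < A)
    (μ : Measure ℝ) [IsProbabilityMeasure μ] (hμ : ∀ᵐ x ∂μ, |x| ≤ A) :
    ∀ y : ℝ,
      (∫ x, x * gaussPdf σ (y - x) ∂μ) / (∫ x, gaussPdf σ (y - x) ∂μ)
        = y + σ ^ 2 * deriv (fun u => Real.log (∫ x, gaussPdf σ (u - x) ∂μ)) y := by
  intro y
  set C := (Real.sqrt (2 * Real.pi * σ ^ 2))⁻¹ with hC
  have hσ2 : (0:ℝ) < σ ^ 2 := by positivity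
  have hCpos : 0 < C := by
    rw [hC]
    exact inv_pos.mpr (Real.sqrt_pos.mpr (by positivity))
  have meas_g : ∀ u : ℝ, AEStronglyMeasurable (fun x => gaussPdf σ (u - x)) μ := fun u =>
    ((gaussPdf_cont σ).comp (continuous_const.sub continuous_id)).aestronglyMeasurable
  have int_g : ∀ u : ℝ, Integrable (fun x => gaussPdf σ (u - x)) μ := by
    intro u
    refine Integrable.mono' (integrable_const C) (meas_g u) ?_
    filter_upwards with x
    rw [Real.norm_eq_abs, abs_of_pos (gaussPdf_pos σ _ hσ)]
    exact gaussPdf_le σ _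
  have int_xg : Integrable (fun x => x * gaussPdf σ (y - x)) μ := by
    refine Integrable.mono' (integrable_const (A * C)) ?_ ?_
    · exact (continuous_id.mul ((gaussPdf_cont σ).comp
        (continuous_const.sub continuous_id))).aestronglyMeasurable
    · filter_upwards [hμ] with x hx
      rw [Real.norm_eq_abs, abs_mul, abs_of_pos (gaussPdf_pos σ _ hσ)]
      exact mul_le_mul hx (gaussPdf_le σ _) (le_of_lt (gaussPdf_pos σ _ hσ)) hA.le
  -- positivity of the density
  have f_pos : ∀ u : ℝ, 0 < ∫ x, gaussPdf σ (u - x) ∂μ := by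
    intro u
    calc (0:ℝ) < gaussPdf σ (|u| + A) := gaussPdf_pos σ _ hσ
      _ = ∫ _, gaussPdf σ (|u| + A) ∂μ := by simp
      _ ≤ ∫ x, gaussPdf σ (u - x) ∂μ := by
        refine integral_mono_ae (integrable_const _) (int_g u) ?_
        filter_upwards [hμ] with x hx
        refine gaussPdf_anti σ _ _ hσ ?_
        have h1 : |u - x| ≤ |u| + A := (abs_sub u x).trans (by linarith)
        have h2 : |(|u| + A)| = |u| + A := abs_of_pos (by positivity)
        rw [h2]; exact h1
  -- derivative of the density
  have hderiv : HasDerivAt (fun u => ∫ x, gaussPdf σ (u - x) ∂μ)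
      (∫ x, (x - y) / σ ^ 2 * gaussPdf σ (y - x) ∂μ) y := by
    have key := hasDerivAt_integral_of_dominated_loc_of_deriv_le (μ := μ)
      (F := fun u x => gaussPdf σ (u - x))
      (F' := fun u x => (x - u) / σ ^ 2 * gaussPdf σ (u - x))
      (bound := fun _ => (|y| + 1 + A) / σ ^ 2 * C) (x₀ := y)
      (Metric.ball_mem_nhds y one_pos)
      (Filter.Eventually.of_forall fun u => meas_g u)
      (int_g y)
      (((continuous_id.sub continuous_const).div_const _ |>.mul
        ((gaussPdf_cont σ).comp (continuous_const.sub continuous_id))).aestronglyMeasurable)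
      ?_ (integrable_const _) ?_
    · exact key.2
    · filter_upwards [hμ] with x hx u hu
      rw [Real.norm_eq_abs, abs_mul, abs_div, abs_of_pos hσ2,
        abs_of_pos (gaussPdf_pos σ _ hσ)]
      have hu' : |u - y| < 1 := by
        simpa [Real.dist_eq] using Metric.mem_ball.mp hu
      have h2 : |u| ≤ |y| + 1 := by
        calc |u| = |y + (u - y)| := by ring_nf
          _ ≤ |y| + |u - y| := abs_add_le _ _
          _ ≤ |y| + 1 := by linarith
      have h1 : |x - u| ≤ |y| + 1 + A := by
        calc |x - u| ≤ |x| + |u| := abs_sub x u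
          _ ≤ A + (|y| + 1) := add_le_add hx h2
          _ = |y| + 1 + A := by ring
      exact mul_le_mul (by gcongr) (gaussPdf_le σ _)
        (le_of_lt (gaussPdf_pos σ _ hσ)) (by positivity)
    · filter_upwards with x u _
      exact gauss_hasDeriv σ x hσ u
  -- linearity
  have hlin : (∫ x, (x - y) / σ ^ 2 * gaussPdf σ (y - x) ∂μ)
      = (σ ^ 2)⁻¹ * ((∫ x, x * gaussPdf σ (y - x) ∂μ)
          - y * ∫ x, gaussPdf σ (y - x) ∂μ) := by
    calc (∫ x, (x - y) / σ ^ 2 * gaussPdf σ (y - x) ∂μ)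
        = ∫ x, (σ ^ 2)⁻¹ * (x * gaussPdf σ (y - x) - y * gaussPdf σ (y - x)) ∂μ := by
          congr 1; funext x; ring
      _ = (σ ^ 2)⁻¹ * ∫ x, (x * gaussPdf σ (y - x) - y * gaussPdf σ (y - x)) ∂μ := by
          rw [integral_const_mul]
      _ = _ := by
          rw [integral_sub int_xg ((int_g y).const_mul y), integral_const_mul]
  have hlog : deriv (fun u => Real.log (∫ x, gaussPdf σ (u - x) ∂μ)) y
      = (∫ x, (x - y) / σ ^ 2 * gaussPdf σ (y - x) ∂μ) / (∫ x, gaussPdf σ (y - x) ∂μ) :=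
    (hderiv.log (f_pos y).ne').deriv
  rw [hlog, hlin]
  have hf := (f_pos y).ne'
  field_simp
  ring
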